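/- arXiv:1304.7287 — 4 statements merged into one kernel-verified Lean document; each statement's English description precedes it below -/
import Mathlib

section
/- Let b : ℕ → {0,1} be a non-degenerate binary sequence. Then for every positive integer x, U⁻_b(U⁺_b(x)) < x, where U⁺_b(x) is the number of 1's before the x-th 0 in b and U⁻_b(x) is the number of 0's before the x-th 1 in b. -/
open Filter Set

/-- The number of `true`s (1's) appearing strictly before the `x`-th `false` (0)
in the binary sequence `b`; `Uplus b 0 = 0`. -/
noncomputable def Uplus (b : ℕ → Bool) (x : ℕ) : ℕ :=
  if x = 0 then 0
  else sInf {j : ℕ | ((Finset.range j).filter (fun i => b i = false)).card = x} - x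

/-- The number of `false`s (0's) appearing strictly before the `x`-th `true` (1). -/
noncomputable def Uminus (b : ℕ → Bool) (x : ℕ) : ℕ :=
  Uplus (fun i => !(b i)) x

/-- A binary sequence is non-degenerate if it has infinitely many 0's and
infinitely many 1's. -/
def NonDeg (b : ℕ → Bool) : Prop :=
  {i | b i = false}.Infinite ∧ {i | b i = true}.Infinite

/-- An arrow environment is non-degenerate if every column is non-degenerate. -/
def NonDegEnv (a : ℤ → ℕ → Bool) : Prop := ∀ x : ℤ, NonDeg (a x)

/-- The history (most recent position first) of the walk driven by the arrow
environment `a`, started at `0`: at its `k`-th visit (`k` counted from `0`)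
to site `x` the walk moves right if `a x k = true` and left otherwise. -/
def walkHist (a : ℤ → ℕ → Bool) : ℕ → List ℤ
  | 0 => [0]
  | t + 1 =>
    let h := walkHist a t
    let x := h.headI
    let k := h.countP (fun y => decide (y = x)) - 1
    (x + (if a x k then 1 else -1)) :: h

/-- The position at time `t` of the walk driven by `a`, started at `0`. -/
def walk (a : ℤ → ℕ → Bool) (t : ℕ) : ℤ := (walkHist a t).headI

/-- `Zplus a n y`: the forward process `Z⁺` with initial value `y`. -/
noncomputable def Zplus (a : ℤ → ℕ → Bool) : ℕ → ℕ → ℕ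
  | 0, y => y
  | n + 1, y => Uplus (a (n : ℤ)) (Zplus a n y)

/-- `Zminus a n y`: the backward process `Z⁻` with initial value `y`. -/
noncomputable def Zminus (a : ℤ → ℕ → Bool) : ℕ → ℕ → ℕ
  | 0, y => y
  | n + 1, y => Uminus (a (-(n : ℤ))) (Zminus a n y)

/-- `ZminusBack a l y = U⁻_{a 0} ∘ ⋯ ∘ U⁻_{a (l-1)} (y)`. -/
noncomputable def ZminusBack (a : ℤ → ℕ → Bool) (l y : ℕ) : ℕ :=
  (List.range l).foldr (fun i z => Uminus (a (i : ℤ)) z) y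

lemma sInf_count_eq (p : ℕ → Prop) [DecidablePred p] (hp : (setOf p).Infinite)
    (x : ℕ) (hx : 1 ≤ x) :
    sInf {j | Nat.count p j = x} = Nat.nth p (x - 1) + 1 := by
  have hmem : Nat.count p (Nat.nth p (x - 1) + 1) = x := by
    rw [Nat.count_nth_succ_of_infinite hp]
    omega
  refine le_antisymm (Nat.sInf_le (show _ ∈ {j | Nat.count p j = x} from hmem)) ?_
  have hne : {j | Nat.count p j = x}.Nonempty := ⟨_, hmem⟩
  have h2 : Nat.count p (sInf {j | Nat.count p j = x}) = x := Nat.sInf_mem hne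
  by_contra h
  push_neg at h
  have : sInf {j | Nat.count p j = x} ≤ Nat.nth p (x - 1) := by omega
  have := (Nat.count_monotone p) this
  rw [h2, Nat.count_nth_of_infinite hp] at this
  omega

lemma Uplus_eq (b : ℕ → Bool) (hb : {i | b i = false}.Infinite) (x : ℕ) (hx : 1 ≤ x) :
    Uplus b x = Nat.nth (fun i => b i = false) (x - 1) + 1 - x := by
  rw [Uplus, if_neg (by omega)]
  congr 1
  have : {j : ℕ | ((Finset.range j).filter (fun i => b i = false)).card = x}
      = {j | Nat.count (fun i => b i = false) j = x} := by
    ext j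
    simp [Nat.count_eq_card_filter_range]
  rw [this, sInf_count_eq _ hb x hx]

/-- `U⁻_b ∘ U⁺_b (x) < x` for every positive `x`. -/
theorem stmt_2 (b : ℕ → Bool) (hb : NonDeg b) (x : ℕ) (hx : 1 ≤ x) :
    Uminus b (Uplus b x) < x := by
  obtain ⟨hf, ht⟩ := hb
  set p : ℕ → Prop := fun i => b i = false with hp
  set q : ℕ → Prop := fun i => (!(b i)) = false with hq
  have hq' : {i | q i}.Infinite := by
    convert ht using 2; ext i; simp [hq]
  set N := Nat.nth p (x - 1) with hN
  have hNmem : p N := Nat.nth_mem_of_infinite hf _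
  have hcountN : Nat.count p N = x - 1 := Nat.count_nth_of_infinite hf _
  have hU : Uplus b x = N + 1 - x := Uplus_eq b hf x hx
  -- count q (N+1) = N + 1 - x
  have hpq : ∀ n, Nat.count p n + Nat.count q n = n := by
    intro n
    induction n with
    | zero => simp
    | succ n ih =>
      rw [Nat.count_succ, Nat.count_succ]
      by_cases h : b n = false
      · rw [if_pos h, if_neg (by simp [hq, h])]; omega
      · rw [if_neg h, if_pos (by simp [hq]; simpa using h)]; omega
  set y := N + 1 - x with hy
  have hxN : x ≤ N + 1 := by
    have := hpq (N + 1)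
    rw [Nat.count_succ, if_pos hNmem, hcountN] at this
    omega
  rw [hU]
  by_cases hy0 : y = 0
  · rw [hy0]
    simp [Uminus, Uplus]
    omega
  · have hy1 : 1 ≤ y := by omega
    have hUm : Uminus b y = Nat.nth q (y - 1) + 1 - y := Uplus_eq _ hq' y hy1
    set M := Nat.nth q (y - 1) with hM
    have hcountqN : Nat.count q N = y := by
      have h1 := hpq N
      rw [hcountN] at h1
      omega
    have hMN : M < N := by
      apply Nat.nth_lt_of_lt_count
      rw [hcountqN]; omega
    have hcM : Nat.count q (M + 1) = y := by
      rw [Nat.count_nth_succ_of_infinite hq']; omega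
    have hcpM : Nat.count p (M + 1) = M + 1 - y := by
      have := hpq (M + 1); omega
    have hmono : Nat.count p (M + 1) ≤ Nat.count p N := Nat.count_monotone p (by omega)
    rw [hUm]
    omega
end

section
/- Let a be a non-degenerate arrow environment on ℤ and let X be the deterministic walk on ℤ started at 0 which at each visit to a site x moves right if the next unused arrow at x is 1 and left if it is 0 (the walk at its k-th visit to x uses arrow a(x,k)). Let T₋₁ be the first hitting time of −1, and for n ≥ 1 let W_n be the total number of crossings of the edge {n−1,n} from n−1 to n before time T₋₁ (with W₀ = 1). Define Z⁺_0 = 1 and Z⁺_n = U⁺_{a(n−1,·)}(Z⁺_{n−1}) for n ≥ 1, where U⁺_b(x) is the number of 1's before the x-th 0 of b. If T₋₁ < ∞, then Z⁺_n = W_n for all n ≥ 0. -/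
open Filter Set

section Aux

variable (a : ℤ → ℕ → Bool)

def cnt (x : ℤ) (t : ℕ) : ℕ := ((Finset.range t).filter (fun s => walk a s = x)).card

lemma walk_zero : walk a 0 = 0 := rfl

lemma walkHist_succ (t : ℕ) : walkHist a (t+1) = walk a (t+1) :: walkHist a t := rfl

lemma cnt_succ (x : ℤ) (t : ℕ) :
    cnt a x (t+1) = cnt a x t + if walk a t = x then 1 else 0 := by
  rw [cnt, Finset.range_add_one, Finset.filter_insert]
  split
  · rw [Finset.card_insert_of_notMem (by simp)]; simp [cnt]
  · simp [cnt]

lemma cnt_mono (x : ℤ) {s t : ℕ} (hst : s ≤ t) : cnt a x s ≤ cnt a x t :=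
  Finset.card_le_card (Finset.filter_subset_filter _ (by simpa using Finset.range_subset_range.2 hst))

lemma countP_walkHist (x : ℤ) : ∀ t, (walkHist a t).countP (fun y => decide (y = x)) = cnt a x (t+1)
  | 0 => by
    have h1 : cnt a x 1 = if (0:ℤ) = x then 1 else 0 := by
      rcases eq_or_ne (0:ℤ) x with h | h <;>
        simp [cnt, Finset.range_one, Finset.filter_singleton, walk_zero, h]
    rw [h1]
    show List.countP (fun y => decide (y = x)) [0] = _
    rw [List.countP_singleton]
    rcases eq_or_ne (0:ℤ) x with h | h <;> simp [h]
  | t + 1 => by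
    rw [walkHist_succ, List.countP_cons, countP_walkHist x t, cnt_succ a x (t+1)]
    rcases eq_or_ne (walk a (t+1)) x with h | h <;> simp [h]

lemma walk_succ (t : ℕ) :
    walk a (t+1) = walk a t + (if a (walk a t) (cnt a (walk a t) t) then 1 else -1) := by
  have hk : (walkHist a t).countP (fun y => decide (y = walk a t)) - 1 = cnt a (walk a t) t := by
    rw [countP_walkHist, cnt_succ]; simp
  show walk a t + (if a (walk a t) ((walkHist a t).countP (fun y => decide (y = walk a t)) - 1)
      then 1 else -1) = _
  rw [hk]

lemma walk_step (t : ℕ) : walk a (t+1) = walk a t + 1 ∨ walk a (t+1) = walk a t - 1 := by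
  rw [walk_succ]
  split
  · left; ring
  · right; ring

lemma walk_intermediate {s0 s1 : ℕ} (hle : s0 ≤ s1) {c : ℤ}
    (h0 : c ≤ walk a s0) (h1 : walk a s1 ≤ c) :
    ∃ s, s0 ≤ s ∧ s ≤ s1 ∧ walk a s = c := by
  induction s1, hle using Nat.le_induction with
  | base => exact ⟨s0, le_refl _, le_refl _, le_antisymm h1 h0⟩
  | succ m hm ih =>
    rcases le_or_gt (walk a m) c with hc | hc
    · obtain ⟨s, hs1, hs2, hs3⟩ := ih hc
      exact ⟨s, hs1, hs2.trans (Nat.le_succ m), hs3⟩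
    · refine ⟨m + 1, by omega, le_refl _, ?_⟩
      rcases walk_step a m with hstep | hstep <;> omega

section T
variable {T : ℕ} (hT : walk a T = -1) (hmin : ∀ t < T, walk a t ≠ -1)

include hmin in
lemma walk_nonneg : ∀ t < T, 0 ≤ walk a t := by
  intro t
  induction t with
  | zero => intro _; rw [walk_zero]
  | succ m ih =>
    intro hm
    have h1 := ih (by omega)
    have h2 := hmin (m+1) hm
    rcases walk_step a m with hstep | hstep <;> omega

include hT in
lemma balance {x : ℤ} (hx : 0 ≤ x) :
    ((Finset.range T).filter (fun t => walk a t = x ∧ walk a (t+1) = x + 1)).card =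
    ((Finset.range T).filter (fun t => walk a t = x + 1 ∧ walk a (t+1) = x)).card := by
  have key : ∀ t : ℕ,
      ((if x + 1 ≤ walk a (t+1) then (1:ℤ) else 0) - (if x + 1 ≤ walk a t then (1:ℤ) else 0)) =
      (if walk a t = x ∧ walk a (t+1) = x + 1 then (1:ℤ) else 0)
        - (if walk a t = x + 1 ∧ walk a (t+1) = x then (1:ℤ) else 0) := by
    intro t
    rcases walk_step a t with hstep | hstep <;> split_ifs <;> omega
  have tele := Finset.sum_range_sub (fun t => if x + 1 ≤ walk a t then (1:ℤ) else 0) T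
  rw [Finset.sum_congr rfl (fun t _ => key t)] at tele
  rw [Finset.sum_sub_distrib, Finset.sum_boole, Finset.sum_boole] at tele
  have e0 : ¬ (x + 1 ≤ walk a 0) := by rw [walk_zero]; omega
  have eT : ¬ (x + 1 ≤ walk a T) := by rw [hT]; omega
  simp only [eT, e0, if_neg] at tele
  have := sub_eq_zero.mp (by linarith : ((Finset.range T).filter
    (fun t => walk a t = x ∧ walk a (t+1) = x + 1)).card -
    (((Finset.range T).filter (fun t => walk a t = x + 1 ∧ walk a (t+1) = x)).card : ℤ) = 0)
  exact_mod_cast this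

include hT hmin in
lemma down_zero :
    ((Finset.range T).filter (fun t => walk a t = 0 ∧ walk a (t+1) = -1)).card = 1 := by
  have hT0 : T ≠ 0 := by
    intro h0; rw [h0] at hT; exact absurd hT (by rw [walk_zero]; omega)
  have hset : (Finset.range T).filter (fun t => walk a t = 0 ∧ walk a (t+1) = -1) = {T - 1} := by
    ext t
    simp only [Finset.mem_filter, Finset.mem_range, Finset.mem_singleton]
    constructor
    · rintro ⟨ht, -, h2⟩
      by_contra hne
      exact hmin (t+1) (by omega) h2
    · rintro rfl
      have h1 : T - 1 + 1 = T := by omega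
      have h2 := walk_nonneg a hmin (T-1) (by omega)
      rcases walk_step a (T-1) with hstep | hstep <;>
        rw [h1] at hstep <;> refine ⟨by omega, by omega, by rw [h1, hT]⟩
  rw [hset, Finset.card_singleton]

lemma exists_visit (x : ℤ) : ∀ m k, k < cnt a x m → ∃ t < m, walk a t = x ∧ cnt a x t = k := by
  intro m
  induction m with
  | zero => intro k hk; simp [cnt] at hk
  | succ m ih =>
    intro k hk
    rw [cnt_succ] at hk
    by_cases hkm : k < cnt a x m
    · obtain ⟨t, ht1, ht2, ht3⟩ := ih k hkm
      exact ⟨t, by omega, ht2, ht3⟩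
    · have hw : walk a m = x := by by_contra hc; simp [hc] at hk; omega
      have : k = cnt a x m := by simp [hw] at hk; omega
      exact ⟨m, by omega, hw, this.symm⟩

lemma visit_card (x : ℤ) (Q : ℕ → Prop) [DecidablePred Q] (m : ℕ) :
    ((Finset.range m).filter (fun t => walk a t = x ∧ Q (cnt a x t))).card =
    ((Finset.range (cnt a x m)).filter Q).card := by
  apply Finset.card_bij (fun t _ => cnt a x t)
  · intro t ht
    simp only [Finset.mem_filter, Finset.mem_range] at ht ⊢
    refine ⟨?_, ht.2.2⟩
    calc cnt a x t < cnt a x (t+1) := by rw [cnt_succ]; simp [ht.2.1]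
    _ ≤ cnt a x m := cnt_mono a x ht.1
  · intro t ht t' ht' heq
    simp only [Finset.mem_filter, Finset.mem_range] at ht ht'
    by_contra hne
    rcases Nat.lt_or_ge t t' with hlt | hge
    · have : cnt a x (t+1) ≤ cnt a x t' := cnt_mono a x hlt
      rw [cnt_succ] at this; simp [ht.2.1] at this; omega
    · have hlt : t' < t := by omega
      have : cnt a x (t'+1) ≤ cnt a x t := cnt_mono a x hlt
      rw [cnt_succ] at this; simp [ht'.2.1] at this; omega
  · intro k hk
    simp only [Finset.mem_filter, Finset.mem_range] at hk
    obtain ⟨t, ht1, ht2, ht3⟩ := exists_visit a x m k hk.1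
    exact ⟨t, by simp only [Finset.mem_filter, Finset.mem_range]; exact ⟨ht1, ht2, ht3 ▸ hk.2⟩, ht3⟩

lemma step_iff_false {t : ℕ} {x : ℤ} (hx : walk a t = x) :
    (walk a (t+1) = x - 1) ↔ a x (cnt a x t) = false := by
  have h := walk_succ a t
  rw [hx] at h
  rcases Bool.eq_false_or_eq_true (a x (cnt a x t)) with hb | hb <;>
    rw [hb] at h ⊢ <;> simp at h ⊢ <;> omega

lemma step_iff_true {t : ℕ} {x : ℤ} (hx : walk a t = x) :
    (walk a (t+1) = x + 1) ↔ a x (cnt a x t) = true := by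
  have h := walk_succ a t
  rw [hx] at h
  rcases Bool.eq_false_or_eq_true (a x (cnt a x t)) with hb | hb <;>
    rw [hb] at h ⊢ <;> simp at h ⊢ <;> omega

lemma down_card (x : ℤ) (m : ℕ) :
    ((Finset.range m).filter (fun t => walk a t = x ∧ walk a (t+1) = x - 1)).card =
    ((Finset.range (cnt a x m)).filter (fun k => a x k = false)).card := by
  rw [← visit_card a x (fun k => a x k = false) m]
  congr 1
  apply Finset.filter_congr
  intro t _
  constructor
  · rintro ⟨h1, h2⟩; exact ⟨h1, (step_iff_false a h1).mp h2⟩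
  · rintro ⟨h1, h2⟩; exact ⟨h1, (step_iff_false a h1).mpr h2⟩

lemma up_card (x : ℤ) (m : ℕ) :
    ((Finset.range m).filter (fun t => walk a t = x ∧ walk a (t+1) = x + 1)).card =
    ((Finset.range (cnt a x m)).filter (fun k => a x k = true)).card := by
  rw [← visit_card a x (fun k => a x k = true) m]
  congr 1
  apply Finset.filter_congr
  intro t _
  constructor
  · rintro ⟨h1, h2⟩; exact ⟨h1, (step_iff_true a h1).mp h2⟩
  · rintro ⟨h1, h2⟩; exact ⟨h1, (step_iff_true a h1).mpr h2⟩

include hT in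
lemma last_arrow (n : ℕ) (hV : 1 ≤ cnt a (n:ℤ) T) :
    a (n:ℤ) (cnt a (n:ℤ) T - 1) = false := by
  set x : ℤ := (n:ℤ) with hxdef
  set S := (Finset.range T).filter (fun t => walk a t = x) with hSdef
  have hSne : S.Nonempty := Finset.card_pos.mp (by rw [hSdef]; exact hV)
  set t' := S.max' hSne with ht'def
  have ht'mem : t' ∈ S := S.max'_mem hSne
  have ht'max : ∀ s ∈ S, s ≤ t' := fun s hs => S.le_max' s hs
  simp only [hSdef, Finset.mem_filter, Finset.mem_range] at ht'mem
  obtain ⟨ht'T, ht'w⟩ := ht'mem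
  have hnotafter : ∀ s, t' < s → s < T → walk a s ≠ x := by
    intro s hs1 hs2 hw
    have : s ∈ S := by simp only [hSdef, Finset.mem_filter, Finset.mem_range]; exact ⟨hs2, hw⟩
    have := ht'max s this; omega
  have hconst : ∀ s, t' + 1 ≤ s → s ≤ T → cnt a x s = cnt a x (t' + 1) := by
    intro s hs
    induction s, hs using Nat.le_induction with
    | base => intro _; rfl
    | succ m hm ih =>
      intro hmT
      rw [cnt_succ, if_neg (hnotafter m (by omega) (by omega)), add_zero]
      exact ih (by omega)
    
  have hcntT : cnt a x T = cnt a x t' + 1 := by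
    rw [hconst T (by omega) le_rfl, cnt_succ, if_pos ht'w]
  have hstep : walk a (t' + 1) = x - 1 := by
    by_contra hc
    have hup : walk a (t' + 1) = x + 1 := by
      rcases walk_step a t' with hs | hs <;> omega
    obtain ⟨s, hs1, hs2, hs3⟩ := walk_intermediate a (show t' + 1 ≤ T by omega)
      (c := x) (by omega) (by rw [hT]; omega)
    have hsT : s ≠ T := by intro h; rw [h, hT] at hs3; omega
    exact hnotafter s (by omega) (by omega) hs3
  have := (step_iff_false a ht'w).mp hstep
  rwa [show cnt a x T - 1 = cnt a x t' by omega]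

end T

lemma fc_mono (b : ℕ → Bool) {s t : ℕ} (hst : s ≤ t) :
    ((Finset.range s).filter (fun i => b i = false)).card ≤
    ((Finset.range t).filter (fun i => b i = false)).card :=
  Finset.card_le_card (Finset.filter_subset_filter _ (by simpa using Finset.range_subset_range.2 hst))

lemma Uplus_eval (b : ℕ → Bool) (V W : ℕ) (hW : 1 ≤ W)
    (hc : ((Finset.range V).filter (fun i => b i = false)).card = W)
    (hlast : b (V - 1) = false) : Uplus b W = V - W := by
  have hV : 1 ≤ V := by
    by_contra hc'
    rw [show V = 0 by omega] at hc
    simp at hc; omega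
  have hprev : ((Finset.range (V-1)).filter (fun i => b i = false)).card = W - 1 := by
    have h1 : V = (V - 1) + 1 := by omega
    rw [h1, Finset.range_add_one, Finset.filter_insert, if_pos hlast,
      Finset.card_insert_of_notMem (by simp)] at hc
    omega
  have hmem : V ∈ {j : ℕ | ((Finset.range j).filter (fun i => b i = false)).card = W} := hc
  have hinf : sInf {j : ℕ | ((Finset.range j).filter (fun i => b i = false)).card = W} = V := by
    refine le_antisymm (Nat.sInf_le hmem) ?_
    by_contra hlt
    push_neg at hlt
    have hmem' := Nat.sInf_mem ⟨V, hmem⟩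
    have hle : sInf {j : ℕ | ((Finset.range j).filter (fun i => b i = false)).card = W} ≤ V - 1 :=
      by omega
    have := fc_mono b hle
    rw [hmem', hprev] at this
    omega
  rw [Uplus, if_neg (by omega), hinf]

section T2
variable {T : ℕ} (hT : walk a T = -1) (hmin : ∀ t < T, walk a t ≠ -1)

include hT hmin in
lemma key_down : ∀ n : ℕ, Zplus a n 1 =
    ((Finset.range T).filter
      (fun t => walk a t = (n:ℤ) ∧ walk a (t+1) = (n:ℤ) - 1)).card := by
  intro n
  induction n with
  | zero =>
    simp only [Zplus, Nat.cast_zero, zero_sub]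
    exact (down_zero a hT hmin).symm
  | succ n ih =>
    simp only [Zplus, ih]
    set x : ℤ := (n:ℤ) with hxdef
    set V := cnt a x T with hVdef
    set F := ((Finset.range V).filter (fun i => a x i = false)).card with hFdef
    set Tr := ((Finset.range V).filter (fun i => a x i = true)).card with hTrdef
    have hdc : ((Finset.range T).filter
        (fun t => walk a t = x ∧ walk a (t+1) = x - 1)).card = F := down_card a x T
    have huc : ((Finset.range T).filter
        (fun t => walk a t = x ∧ walk a (t+1) = x + 1)).card = Tr := up_card a x T
    have hpred : ((Finset.range T).filter
        (fun t => walk a t = ((n+1:ℕ):ℤ) ∧ walk a (t+1) = ((n+1:ℕ):ℤ) - 1)).card =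
        ((Finset.range T).filter
        (fun t => walk a t = x + 1 ∧ walk a (t+1) = x)).card := by
      congr 1
      apply Finset.filter_congr
      intro t _
      constructor
      · rintro ⟨h1, h2⟩
        refine ⟨by rw [h1]; push_cast; ring, by rw [h2]; push_cast; ring⟩
      · rintro ⟨h1, h2⟩
        refine ⟨by rw [h1]; push_cast; ring, by rw [h2]; push_cast; ring⟩
    rw [hdc, hpred, ← balance a hT (by positivity : (0:ℤ) ≤ x), huc]
    have hsplit : F + Tr = V := by
      have hh := Finset.card_filter_add_card_filter_not
        (s := Finset.range V) (p := fun i => a x i = false)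
      rw [show (Finset.range V).filter (fun i => ¬ a x i = false) =
          (Finset.range V).filter (fun i => a x i = true) from
        Finset.filter_congr (fun i _ => by simp)] at hh
      simpa using hh
    rcases Nat.eq_zero_or_pos V with hV0 | hV1
    · have hF0 : F = 0 := by omega
      have hT0 : Tr = 0 := by omega
      rw [hF0, hT0, Uplus, if_pos rfl]
    · have hlast : a x (V - 1) = false := last_arrow a hT n hV1
      have hF1 : 1 ≤ F := by
        have : V - 1 ∈ (Finset.range V).filter (fun i => a x i = false) := by
          simp only [Finset.mem_filter, Finset.mem_range]
          exact ⟨by omega, hlast⟩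
        have := Finset.card_pos.mpr ⟨_, this⟩
        omega
      rw [Uplus_eval (a x) V F hF1 hFdef.symm hlast]
      omega

end T2

end Aux

/-- if `T₋₁ < ∞` then `Z⁺_n = W_n` for all `n ≥ 0`, where `W_n` is the
number of right crossings of the edge `{n-1,n}` before time `T₋₁` (and `W₀ = 1`). -/
theorem stmt_4 (a : ℤ → ℕ → Bool) (hnd : NonDegEnv a) (h : ∃ t, walk a t = -1) :
    ∀ n : ℕ, Zplus a n 1 =
      if n = 0 then 1
      else ((Finset.range (Nat.find h)).filter
        (fun t => walk a t = (n : ℤ) - 1 ∧ walk a (t + 1) = (n : ℤ))).card := by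
  have hT : walk a (Nat.find h) = -1 := Nat.find_spec h
  have hmin : ∀ t < Nat.find h, walk a t ≠ -1 := fun t ht => Nat.find_min h ht
  intro n
  rcases Nat.eq_zero_or_pos n with rfl | hn
  · simp [Zplus]
  · rw [if_neg (by omega), key_down a hT hmin n]
    have hx : (0:ℤ) ≤ (n:ℤ) - 1 := by
      have : (1:ℤ) ≤ (n:ℤ) := by exact_mod_cast hn
      omega
    have hb := balance a hT (x := (n:ℤ) - 1) hx
    rw [sub_add_cancel] at hb
    exact hb.symm
end

section
/- Let a be a non-degenerate arrow environment, X the walk on ℤ driven by a started at 0, and T₋₁ its hitting time of −1. Define the process Z⁺ by Z⁺_0 = 1 and Z⁺_n = U⁺_{a(n−1,·)}(Z⁺_{n−1}). Then T₋₁ < ∞ if and only if there exists n with Z⁺_n = 0. -/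
open Filter Set

namespace Stmt6

def Fcnt (b : ℕ → Bool) (m : ℕ) : ℕ := ((Finset.range m).filter (fun i => b i = false)).card
def Ocnt (b : ℕ → Bool) (m : ℕ) : ℕ := ((Finset.range m).filter (fun i => b i = true)).card

lemma Fcnt_succ (b : ℕ → Bool) (m : ℕ) :
    Fcnt b (m+1) = Fcnt b m + if b m = false then 1 else 0 := by
  unfold Fcnt
  rw [Finset.range_add_one, Finset.filter_insert]
  split_ifs with h
  · rw [Finset.card_insert_of_notMem (by simp)]
  · omega

lemma Ocnt_succ (b : ℕ → Bool) (m : ℕ) :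
    Ocnt b (m+1) = Ocnt b m + if b m = true then 1 else 0 := by
  unfold Ocnt
  rw [Finset.range_add_one, Finset.filter_insert]
  split_ifs with h
  · rw [Finset.card_insert_of_notMem (by simp)]
  · omega

lemma Ocnt_add_Fcnt (b : ℕ → Bool) (m : ℕ) : Ocnt b m + Fcnt b m = m := by
  induction m with
  | zero => simp [Ocnt, Fcnt]
  | succ m ih =>
    rw [Ocnt_succ, Fcnt_succ]
    cases h : b m <;> simp [h] <;> omega

lemma Fcnt_mono (b : ℕ → Bool) : Monotone (Fcnt b) := by
  intro m n hmn
  exact Finset.card_le_card (Finset.filter_subset_filter _ (Finset.range_subset_range.2 hmn))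

lemma Ocnt_mono (b : ℕ → Bool) : Monotone (Ocnt b) := by
  intro m n hmn
  exact Finset.card_le_card (Finset.filter_subset_filter _ (Finset.range_subset_range.2 hmn))

lemma Fcnt_unbounded (b : ℕ → Bool) (hb : {i | b i = false}.Infinite) (x : ℕ) :
    ∃ m, x ≤ Fcnt b m := by
  induction x with
  | zero => exact ⟨0, Nat.zero_le _⟩
  | succ x ih =>
    obtain ⟨m, hm⟩ := ih
    obtain ⟨i, hi, him⟩ := hb.exists_gt m
    refine ⟨i + 1, ?_⟩
    have hbi : b i = false := hi
    have h1 : Fcnt b (i+1) = Fcnt b i + 1 := by rw [Fcnt_succ, if_pos hbi]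
    have h2 : Fcnt b m ≤ Fcnt b i := Fcnt_mono b him.le
    omega

lemma Fcnt_attain' (b : ℕ → Bool) : ∀ m x, x ≤ Fcnt b m → ∃ j, Fcnt b j = x := by
  intro m
  induction m with
  | zero => intro x hx; simp [Fcnt] at hx; exact ⟨0, by simp [Fcnt, hx]⟩
  | succ m ih =>
    intro x hx
    by_cases h : x ≤ Fcnt b m
    · exact ih x h
    · have := Fcnt_succ b m
      have hx' : x = Fcnt b (m+1) := by split_ifs at this <;> omega
      exact ⟨m+1, hx'.symm⟩

lemma Fcnt_attain (b : ℕ → Bool) (hb : {i | b i = false}.Infinite) (x : ℕ) :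
    ∃ m, Fcnt b m = x := by
  obtain ⟨m, hm⟩ := Fcnt_unbounded b hb x
  exact Fcnt_attain' b m x hm

lemma Uplus_eq (b : ℕ → Bool) (x : ℕ) (h : ∃ m, Fcnt b m = x) :
    Uplus b x = Ocnt b (sInf {j | Fcnt b j = x}) := by
  have hne : {j | Fcnt b j = x}.Nonempty := h
  have hs : Fcnt b (sInf {j | Fcnt b j = x}) = x := Nat.sInf_mem hne
  by_cases hx : x = 0
  · subst hx
    have h0 : sInf {j | Fcnt b j = 0} = 0 :=
      Nat.eq_zero_of_le_zero (Nat.sInf_le (by simp [Fcnt]))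
    simp [Uplus, h0, Ocnt]
  · have := Ocnt_add_Fcnt b (sInf {j | Fcnt b j = x})
    rw [Uplus, if_neg hx]
    have : Ocnt b (sInf {j | Fcnt b j = x}) = sInf {j | Fcnt b j = x} - x := by omega
    rw [this]
    rfl

lemma Uplus_le (b : ℕ → Bool) (m x : ℕ) (h : Fcnt b m = x) : Uplus b x ≤ Ocnt b m := by
  rw [Uplus_eq b x ⟨m, h⟩]
  exact Ocnt_mono b (Nat.sInf_le h)

lemma le_Uplus (b : ℕ → Bool) (hb : {i | b i = false}.Infinite) (m x : ℕ)
    (h : Fcnt b m < x) : Ocnt b m ≤ Uplus b x := by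
  rw [Uplus_eq b x (Fcnt_attain b hb x)]
  have hs : Fcnt b (sInf {j | Fcnt b j = x}) = x := Nat.sInf_mem (Fcnt_attain b hb x)
  refine Ocnt_mono b ?_
  by_contra hc
  push_neg at hc
  have := Fcnt_mono b hc.le
  omega

lemma Uplus_mono (b : ℕ → Bool) (hb : {i | b i = false}.Infinite) {x y : ℕ}
    (hxy : x ≤ y) : Uplus b x ≤ Uplus b y := by
  rcases eq_or_lt_of_le hxy with rfl | hlt
  · exact le_refl _
  · obtain ⟨m, hm⟩ := Fcnt_attain b hb x
    exact le_trans (Uplus_le b m x hm) (le_Uplus b hb m y (by omega))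



variable (a : ℤ → ℕ → Bool)

def vb (x : ℤ) (t : ℕ) : ℕ := ((Finset.range t).filter (fun s => walk a s = x)).card
def upc (x : ℤ) (t : ℕ) : ℕ :=
  ((Finset.range t).filter (fun s => walk a s = x ∧ walk a (s+1) = x+1)).card
def dnc (x : ℤ) (t : ℕ) : ℕ :=
  ((Finset.range t).filter (fun s => walk a s = x ∧ walk a (s+1) = x-1)).card

lemma walk_zero : walk a 0 = 0 := rfl

lemma walkHist_succ (t : ℕ) : walkHist a (t+1) = walk a (t+1) :: walkHist a t := rfl

lemma vb_succ (x : ℤ) (t : ℕ) :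
    vb a x (t+1) = vb a x t + if walk a t = x then 1 else 0 := by
  unfold vb
  rw [Finset.range_add_one, Finset.filter_insert]
  split_ifs with h
  · rw [Finset.card_insert_of_notMem (by simp)]
  · omega

lemma upc_succ (x : ℤ) (t : ℕ) :
    upc a x (t+1) = upc a x t + if walk a t = x ∧ walk a (t+1) = x+1 then 1 else 0 := by
  unfold upc
  rw [Finset.range_add_one, Finset.filter_insert]
  split_ifs with h
  · rw [Finset.card_insert_of_notMem (by simp)]
  · omega

lemma dnc_succ (x : ℤ) (t : ℕ) :
    dnc a x (t+1) = dnc a x t + if walk a t = x ∧ walk a (t+1) = x-1 then 1 else 0 := by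
  unfold dnc
  rw [Finset.range_add_one, Finset.filter_insert]
  split_ifs with h
  · rw [Finset.card_insert_of_notMem (by simp)]
  · omega

lemma hist_countP (t : ℕ) (x : ℤ) :
    (walkHist a t).countP (fun y => decide (y = x)) = vb a x (t+1) := by
  induction t with
  | zero =>
    show ([0] : List ℤ).countP (fun y => decide (y = x)) = _
    rw [vb_succ]
    simp [vb, List.countP, List.countP.go, walk_zero]
    by_cases h : (0:ℤ) = x <;> simp [h]
  | succ t ih =>
    rw [walkHist_succ, List.countP_cons, ih, vb_succ a x (t+1)]
    by_cases h : walk a (t+1) = x <;> simp [h]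

lemma walk_succ (t : ℕ) :
    walk a (t+1) = walk a t + (if a (walk a t) (vb a (walk a t) t) then 1 else -1) := by
  have h1 : walk a (t+1) =
      (walkHist a t).headI + (if a (walkHist a t).headI
        ((walkHist a t).countP (fun y => decide (y = (walkHist a t).headI)) - 1)
        then 1 else -1) := rfl
  have h2 : (walkHist a t).headI = walk a t := rfl
  rw [h1, h2, hist_countP a t (walk a t), vb_succ]
  simp

lemma walk_step (t : ℕ) : walk a (t+1) = walk a t + 1 ∨ walk a (t+1) = walk a t - 1 := by
  rw [walk_succ]
  split_ifs <;> [left; right] <;> ring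

lemma arrow_counts (t : ℕ) (x : ℤ) :
    upc a x t = Ocnt (a x) (vb a x t) ∧ dnc a x t = Fcnt (a x) (vb a x t) := by
  induction t with
  | zero => simp [upc, dnc, vb, Ocnt, Fcnt]
  | succ t ih =>
    obtain ⟨ih1, ih2⟩ := ih
    rw [upc_succ, dnc_succ, vb_succ]
    by_cases hx : walk a t = x
    · subst hx
      rw [if_pos rfl, Ocnt_succ, Fcnt_succ, ih1, ih2]
      have hs := walk_succ a t
      constructor
      · congr 1
        by_cases hA : a (walk a t) (vb a (walk a t) t) = true
        · rw [if_pos hA] at hs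
          rw [if_pos ⟨rfl, hs⟩, if_pos hA]
        · rw [if_neg hA] at hs
          have hA' : a (walk a t) (vb a (walk a t) t) = false := by
            cases h : a (walk a t) (vb a (walk a t) t) <;> simp_all
          rw [if_neg (by rintro ⟨-, h⟩; omega), if_neg (by simp [hA'])]
      · congr 1
        by_cases hA : a (walk a t) (vb a (walk a t) t) = true
        · rw [if_pos hA] at hs
          rw [if_neg (by rintro ⟨-, h⟩; omega), if_neg (by simp [hA])]
        · rw [if_neg hA] at hs
          have hA' : a (walk a t) (vb a (walk a t) t) = false := by
            cases h : a (walk a t) (vb a (walk a t) t) <;> simp_all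
          rw [if_pos ⟨rfl, hs⟩, if_pos hA']
    · have h1 : ¬(walk a t = x ∧ walk a (t+1) = x+1) := fun h => hx h.1
      have h2 : ¬(walk a t = x ∧ walk a (t+1) = x-1) := fun h => hx h.1
      rw [if_neg h1, if_neg h2, if_neg hx]
      simp [ih1, ih2]

lemma flow (t : ℕ) (x : ℤ) :
    upc a (x-1) t + (if (0:ℤ) ≥ x then 1 else 0)
      = dnc a x t + (if walk a t ≥ x then 1 else 0) := by
  induction t with
  | zero =>
    simp only [upc, dnc, Finset.range_zero, Finset.filter_empty, Finset.card_empty,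
      walk_zero]
    split_ifs <;> simp_all
  | succ t ih =>
    rw [upc_succ, dnc_succ]
    rcases walk_step a t with h | h <;> split_ifs at * <;> omega

lemma vb_mono (x : ℤ) : Monotone (vb a x) := fun _ _ h =>
  Finset.card_le_card (Finset.filter_subset_filter _ (Finset.range_subset_range.2 h))

lemma dnc_mono (x : ℤ) : Monotone (dnc a x) := fun _ _ h =>
  Finset.card_le_card (Finset.filter_subset_filter _ (Finset.range_subset_range.2 h))

lemma walk_le (t : ℕ) : walk a t ≤ (t : ℤ) := by
  induction t with
  | zero => simp [walk_zero]
  | succ t ih => rcases walk_step a t with h | h <;> push_cast <;> omega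

lemma exists_visit (x : ℤ) : ∀ t k, k < vb a x t → ∃ s < t, walk a s = x ∧ vb a x s = k := by
  intro t
  induction t with
  | zero => intro k hk; simp [vb] at hk
  | succ t ih =>
    intro k hk
    rw [vb_succ] at hk
    by_cases h : k < vb a x t
    · obtain ⟨s, hs, h1, h2⟩ := ih k h
      exact ⟨s, by omega, h1, h2⟩
    · have hx : walk a t = x := by
        by_contra hc; rw [if_neg hc] at hk; omega
      have hk' : k = vb a x t := by rw [if_pos hx] at hk; omega
      exact ⟨t, by omega, hx, hk'.symm⟩

lemma forward (hnd : NonDegEnv a) (ht : ∃ t, walk a t = -1) : ∃ n : ℕ, Zplus a n 1 = 0 := by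
  classical
  set T := Nat.find ht with hTdef
  have hT1 : walk a T = -1 := Nat.find_spec ht
  have hTmin : ∀ s < T, walk a s ≠ -1 := fun s hs => Nat.find_min ht hs
  have hup : upc a (-1) T = 0 := by
    unfold upc
    rw [Finset.card_eq_zero, Finset.filter_eq_empty_iff]
    intro s hs
    rintro ⟨h1, -⟩
    exact hTmin s (Finset.mem_range.1 hs) h1
  have hd0 : dnc a 0 T = 1 := by
    have h := flow a T 0
    rw [hT1, show ((0:ℤ)-1) = -1 by ring, hup] at h
    norm_num at h
    omega
  have hdn : ∀ n : ℕ, dnc a ((n:ℤ)+1) T = upc a (n:ℤ) T := by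
    intro n
    have h := flow a T ((n:ℤ)+1)
    rw [hT1, show ((n:ℤ)+1-1) = (n:ℤ) by ring] at h
    rw [if_neg (by omega), if_neg (by omega)] at h
    omega
  have key : ∀ n : ℕ, Zplus a n 1 ≤ dnc a (n:ℤ) T := by
    intro n
    induction n with
    | zero => simpa [Zplus] using hd0.ge
    | succ n ih =>
      have hZ : Zplus a (n+1) 1 = Uplus (a (n:ℤ)) (Zplus a n 1) := rfl
      have h1 : Uplus (a (n:ℤ)) (Zplus a n 1) ≤ Uplus (a (n:ℤ)) (dnc a (n:ℤ) T) :=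
        Uplus_mono _ (hnd (n:ℤ)).1 ih
      have h2 : Uplus (a (n:ℤ)) (dnc a (n:ℤ) T) ≤ Ocnt (a (n:ℤ)) (vb a (n:ℤ) T) :=
        Uplus_le _ _ _ (arrow_counts a T (n:ℤ)).2.symm
      have h3 : Ocnt (a (n:ℤ)) (vb a (n:ℤ) T) = upc a (n:ℤ) T := (arrow_counts a T _).1.symm
      have h4 := hdn n
      have hc : ((n+1 : ℕ) : ℤ) = (n:ℤ)+1 := by push_cast; ring
      rw [hZ, hc]
      omega
  have hzero : dnc a ((T+1 : ℕ) : ℤ) T = 0 := by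
    unfold dnc
    rw [Finset.card_eq_zero, Finset.filter_eq_empty_iff]
    intro s hs
    rintro ⟨h1, -⟩
    have h2 := walk_le a s
    have hs' : s < T := Finset.mem_range.1 hs
    omega
  exact ⟨T+1, by have := key (T+1); omega⟩

lemma reverse (hnd : NonDegEnv a) (hne : ∀ t, walk a t ≠ -1) :
    ∀ n : ℕ, Zplus a n 1 ≠ 0 := by
  classical
  have hpos : ∀ t, 0 ≤ walk a t := by
    intro t
    induction t with
    | zero => simp [walk_zero]
    | succ t ih =>
      rcases walk_step a t with h | h
      · omega
      · have := hne (t+1); omega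
  have vb_bdd : ∀ n : ℕ, ∃ B, ∀ t, vb a (n:ℤ) t ≤ B := by
    intro n
    induction n with
    | zero =>
      obtain ⟨f, hf⟩ := (hnd 0).1.nonempty
      have hf' : a 0 f = false := hf
      refine ⟨f, fun t => ?_⟩
      by_contra hc
      push_neg at hc
      obtain ⟨s, -, h1, h2⟩ := exists_visit a 0 t f hc
      have hw := walk_succ a s
      rw [h1, h2, hf'] at hw
      exact hne (s+1) (by rw [hw]; norm_num)
    | succ n ih =>
      obtain ⟨B, hB⟩ := ih
      obtain ⟨M, hM⟩ := Fcnt_unbounded (a ((n:ℤ)+1)) (hnd _).1 (B+2)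
      have goal : ∀ t, vb a ((n:ℤ)+1) t ≤ M := by
        intro t
        by_contra hc
        push_neg at hc
        have h1 : B + 2 ≤ dnc a ((n:ℤ)+1) t := by
          have ha := (arrow_counts a t ((n:ℤ)+1)).2
          have hb := Fcnt_mono (a ((n:ℤ)+1)) hc.le
          omega
        have h2 : dnc a ((n:ℤ)+1) t ≤ vb a (n:ℤ) (t+1) := by
          apply Finset.card_le_card_of_injOn (fun s => s + 1)
          · intro s hs
            simp only [Finset.mem_coe, Finset.mem_filter, Finset.mem_range] at hs ⊢
            refine ⟨by omega, ?_⟩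
            rw [hs.2.2]; ring
          · intro u _ v _ h; simpa using h
        have := hB (t+1)
        omega
      refine ⟨M, fun t => ?_⟩
      have : ((n+1 : ℕ) : ℤ) = (n:ℤ)+1 := by push_cast; ring
      rw [this]
      exact goal t
  have unbdd : ∀ (x : ℤ), (∀ t0, ∃ t ≥ t0, walk a t = x) → ∀ k, ∃ t, k ≤ vb a x t := by
    intro x hx k
    induction k with
    | zero => exact ⟨0, Nat.zero_le _⟩
    | succ k ih =>
      obtain ⟨t, ht⟩ := ih
      obtain ⟨t', ht', hw⟩ := hx t
      refine ⟨t'+1, ?_⟩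
      have h1 := vb_succ a x t'
      have h2 := vb_mono a x ht'
      rw [if_pos hw] at h1
      omega
  have no_more : ∀ n : ℕ, ∃ t0, ∀ t ≥ t0, walk a t ≠ (n:ℤ) := by
    intro n
    obtain ⟨B, hB⟩ := vb_bdd n
    by_contra hc
    push_neg at hc
    obtain ⟨t, ht⟩ := unbdd (n:ℤ) hc (B+1)
    have := hB t
    omega
  have escape : ∀ n : ℕ, ∃ t0, ∀ t ≥ t0, (n:ℤ) < walk a t := by
    intro n
    induction n with
    | zero =>
      obtain ⟨t0, h0⟩ := no_more 0
      exact ⟨t0, fun t ht => by have := hpos t; have := h0 t ht; omega⟩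
    | succ n ih =>
      obtain ⟨t0, h0⟩ := ih
      obtain ⟨t1, h1⟩ := no_more (n+1)
      refine ⟨max t0 t1, fun t ht => ?_⟩
      have ha := h0 t (le_trans (le_max_left _ _) ht)
      have hb := h1 t (le_trans (le_max_right _ _) ht)
      push_cast at hb ⊢
      omega
  have main : ∀ n : ℕ, ∀ t, dnc a (n:ℤ) t < Zplus a n 1 := by
    intro n
    induction n with
    | zero =>
      intro t
      have h0 : dnc a 0 t = 0 := by
        unfold dnc
        rw [Finset.card_eq_zero, Finset.filter_eq_empty_iff]
        intro s hs
        rintro ⟨-, h2⟩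
        exact hne (s+1) (by rw [h2]; ring)
      rw [show ((0:ℕ):ℤ) = 0 by norm_num, h0]
      exact Nat.one_pos
    | succ n ih =>
      have hupb : ∀ t, upc a (n:ℤ) t ≤ Zplus a (n+1) 1 := by
        intro t
        have h1 := (arrow_counts a t (n:ℤ)).1
        have h2 := (arrow_counts a t (n:ℤ)).2
        have h3 : Fcnt (a (n:ℤ)) (vb a (n:ℤ) t) < Zplus a n 1 := by
          rw [← h2]; exact ih t
        have h4 := le_Uplus (a (n:ℤ)) (hnd (n:ℤ)).1 _ _ h3
        calc upc a (n:ℤ) t = Ocnt (a (n:ℤ)) (vb a (n:ℤ) t) := h1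
          _ ≤ Uplus (a (n:ℤ)) (Zplus a n 1) := h4
          _ = Zplus a (n+1) 1 := rfl
      intro t
      have hgt : (n:ℤ) < walk a (max t (Classical.choose (escape n))) := by
        exact Classical.choose_spec (escape n) _ (le_max_right _ _)
      set t' := max t (Classical.choose (escape n)) with ht'def
      have hf := flow a t' ((n:ℤ)+1)
      rw [show ((n:ℤ)+1-1) = (n:ℤ) by ring] at hf
      rw [if_neg (by omega), if_pos (by omega)] at hf
      have hm : dnc a ((n:ℤ)+1) t ≤ dnc a ((n:ℤ)+1) t' := dnc_mono a _ (le_max_left _ _)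
      have hu := hupb t'
      have hcast : ((n+1 : ℕ) : ℤ) = (n:ℤ)+1 := by push_cast; ring
      rw [hcast]
      omega
  intro n hn
  have := main n 0
  omega

end Stmt6


/-- `T₋₁ < ∞` if and only if `Z⁺_n = 0` for some `n`. -/
theorem stmt_6 (a : ℤ → ℕ → Bool) (hnd : NonDegEnv a) :
    (∃ t, walk a t = -1) ↔ ∃ n : ℕ, Zplus a n 1 = 0 := by
  constructor
  · exact Stmt6.forward a hnd
  · rintro ⟨n, hn⟩
    by_contra hc
    push_neg at hc
    exact Stmt6.reverse a hnd hc n hn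
end

section
/- Let a be a non-degenerate arrow environment, X the walk driven by a started at 0, T₋₁ its hitting time of −1, M = sup{ X_t : t < T₋₁ } ∈ ℕ ∪ {∞} the maximal position of the walk before hitting −1, and τ = inf{ n ≥ 0 : Z⁺_n = 0 } ∈ ℕ ∪ {∞} the extinction time of the process Z⁺ defined by Z⁺_0 = 1, Z⁺_n = U⁺_{a(n−1,·)}(Z⁺_{n−1}). Then τ = M + 1 (with the convention ∞ = ∞ + 1). -/
open Filter Set

namespace Stmt7

/-- generic count of a predicate on `range`. -/
lemma fcard_succ (p : ℕ → Prop) [DecidablePred p] (t : ℕ) :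
    ((Finset.range (t+1)).filter p).card
      = ((Finset.range t).filter p).card + (if p t then 1 else 0) := by
  rw [Finset.range_add_one, Finset.filter_insert]
  split
  · rw [Finset.card_insert_of_notMem (by simp)]
  · simp

lemma fcard_mono (p : ℕ → Prop) [DecidablePred p] {t t' : ℕ} (h : t ≤ t') :
    ((Finset.range t).filter p).card ≤ ((Finset.range t').filter p).card :=
  Finset.card_le_card (Finset.filter_subset_filter _ (Finset.range_subset_range.2 h))

def cntT (b : ℕ → Bool) (m : ℕ) : ℕ := ((Finset.range m).filter (fun i => b i = true)).card
def cntF (b : ℕ → Bool) (m : ℕ) : ℕ := ((Finset.range m).filter (fun i => b i = false)).card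

lemma cntT_succ (b : ℕ → Bool) (m : ℕ) :
    cntT b (m+1) = cntT b m + (if b m = true then 1 else 0) := fcard_succ _ m

lemma cntF_succ (b : ℕ → Bool) (m : ℕ) :
    cntF b (m+1) = cntF b m + (if b m = false then 1 else 0) := fcard_succ _ m

lemma cntT_mono (b : ℕ → Bool) {m m' : ℕ} (h : m ≤ m') : cntT b m ≤ cntT b m' :=
  fcard_mono _ h

lemma cntF_mono (b : ℕ → Bool) {m m' : ℕ} (h : m ≤ m') : cntF b m ≤ cntF b m' :=
  fcard_mono _ h

lemma cntT_add_cntF (b : ℕ → Bool) (m : ℕ) : cntT b m + cntF b m = m := by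
  induction m with
  | zero => simp [cntT, cntF]
  | succ m ih =>
    rw [cntT_succ, cntF_succ]
    cases hb : b m <;> simp [hb] <;> omega

lemma cntF_le (b : ℕ → Bool) (m : ℕ) : cntF b m ≤ m := by
  have := cntT_add_cntF b m; omega

/-- a strictly monotone consequence. -/
lemma lt_of_cntF_lt (b : ℕ → Bool) {m m' : ℕ} (h : cntF b m < cntF b m') : m < m' := by
  by_contra hc
  exact absurd (cntF_mono b (Nat.le_of_not_lt hc)) (by omega)

lemma cntF_exists (b : ℕ → Bool) (hb : {i | b i = false}.Infinite) (x : ℕ) :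
    ∃ j, cntF b j = x := by
  induction x with
  | zero => exact ⟨0, by simp [cntF]⟩
  | succ x ih =>
    obtain ⟨j, hj⟩ := ih
    obtain ⟨i, hi, hji⟩ := hb.exists_gt j
    -- least index ≥ j with a false
    have hex : ∃ i, j ≤ i ∧ b i = false := ⟨i, le_of_lt hji, hi⟩
    classical
    set i0 := Nat.find hex with hi0
    have hspec := Nat.find_spec hex
    -- cntF is constant on [j, i0]
    have hconst : ∀ d, j + d ≤ i0 → cntF b (j + d) = x := by
      intro d
      induction d with
      | zero => intro _; simpa using hj
      | succ d ih =>
        intro hd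
        have hd' : j + d ≤ i0 := by omega
        have hbt : b (j + d) ≠ false := by
          intro hf
          exact Nat.find_min hex (m := j + d) (by omega) ⟨by omega, hf⟩
        have : cntF b (j + d + 1) = cntF b (j + d) := by
          rw [cntF_succ]; simp [hbt]
        rw [show j + (d+1) = j + d + 1 by omega, this, ih hd']
    have hji0 : j ≤ i0 := hspec.1
    have hx : cntF b i0 = x := by
      have := hconst (i0 - j) (by omega)
      rwa [show j + (i0 - j) = i0 by omega] at this
    refine ⟨i0 + 1, ?_⟩
    rw [cntF_succ, hx]
    rw [if_pos (show b i0 = false from hspec.2)]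

/-! ### Uplus lemmas -/

lemma Uplus_zero (b : ℕ → Bool) : Uplus b 0 = 0 := by simp [Uplus]

lemma Uplus_set_eq (b : ℕ → Bool) (x : ℕ) :
    {j : ℕ | ((Finset.range j).filter (fun i => b i = false)).card = x}
      = {j : ℕ | cntF b j = x} := rfl

lemma Uplus_eq_cntT (b : ℕ → Bool) {x : ℕ} (hx : x ≠ 0) (hex : ∃ j, cntF b j = x) :
    Uplus b x = cntT b (sInf {j : ℕ | cntF b j = x}) := by
  have hne : {j : ℕ | cntF b j = x}.Nonempty := hex
  have hmem : cntF b (sInf {j : ℕ | cntF b j = x}) = x := Nat.sInf_mem hne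
  have hle : x ≤ sInf {j : ℕ | cntF b j = x} := by
    have := cntF_le b (sInf {j : ℕ | cntF b j = x}); omega
  have htf := cntT_add_cntF b (sInf {j : ℕ | cntF b j = x})
  rw [Uplus, if_neg hx, Uplus_set_eq]
  omega

lemma U2 (b : ℕ → Bool) {x m : ℕ} (hex : ∃ j, cntF b j = x) (h : cntF b m < x) :
    cntT b m ≤ Uplus b x := by
  have hx : x ≠ 0 := by omega
  rw [Uplus_eq_cntT b hx hex]
  have hmem : cntF b (sInf {j : ℕ | cntF b j = x}) = x := Nat.sInf_mem hex
  exact cntT_mono b (le_of_lt (lt_of_cntF_lt b (by omega)))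

lemma U3 (b : ℕ → Bool) {x m : ℕ} (hx : x ≠ 0) (hm : cntF b m = x)
    (hlast : b (m-1) = false) : cntT b m = Uplus b x := by
  have hm1 : 1 ≤ m := by
    rcases Nat.eq_zero_or_pos m with h | h
    · exfalso; apply hx; rw [← hm, h]; simp [cntF]
    · exact h
  rw [Uplus_eq_cntT b hx ⟨m, hm⟩]
  congr 1
  -- show m = sInf
  have hle : sInf {j : ℕ | cntF b j = x} ≤ m := Nat.sInf_le hm
  have hprev : cntF b (m-1) + 1 = x := by
    have : cntF b ((m-1)+1) = cntF b (m-1) + 1 := by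
      rw [cntF_succ]; simp [hlast]
    rw [show (m-1)+1 = m by omega, hm] at this
    omega
  have hmem2 : cntF b (sInf {j : ℕ | cntF b j = x}) = x :=
    Nat.sInf_mem (⟨m, hm⟩ : {j : ℕ | cntF b j = x}.Nonempty)
  have : m - 1 < sInf {j : ℕ | cntF b j = x} := lt_of_cntF_lt b (by omega)
  omega

/-! ### walk lemmas -/

variable (a : ℤ → ℕ → Bool)

/-- number of visits to `x` strictly before time `t` -/
def vis (t : ℕ) (x : ℤ) : ℕ := ((Finset.range t).filter (fun s => walk a s = x)).card

lemma walk_zero : walk a 0 = 0 := rfl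

lemma hist_succ (t : ℕ) : walkHist a (t+1) = walk a (t+1) :: walkHist a t := rfl

lemma vis_succ (t : ℕ) (x : ℤ) :
    vis a (t+1) x = vis a t x + (if walk a t = x then 1 else 0) := fcard_succ _ t

lemma vis_mono {t t' : ℕ} (h : t ≤ t') (x : ℤ) : vis a t x ≤ vis a t' x := fcard_mono _ h

lemma hist_countP (t : ℕ) (x : ℤ) :
    (walkHist a t).countP (fun y => decide (y = x)) = vis a (t+1) x := by
  induction t with
  | zero =>
    show (walkHist a 0).countP _ = _
    rw [show walkHist a 0 = [0] from rfl]
    rw [vis_succ, walk_zero]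
    simp [List.countP_cons, vis, eq_comm]
  | succ t ih =>
    rw [hist_succ, List.countP_cons, ih, vis_succ a (t+1) x]
    by_cases h : walk a (t+1) = x <;> simp [h]

lemma walk_succ (t : ℕ) :
    walk a (t+1) = walk a t + (if a (walk a t) (vis a t (walk a t)) then 1 else -1) := by
  have hc : (walkHist a t).countP (fun y => decide (y = (walkHist a t).headI)) - 1
      = vis a t (walk a t) := by
    rw [show (walkHist a t).headI = walk a t from rfl, hist_countP, vis_succ]
    simp
  show ((walkHist a t).headI + _) = _
  rw [hc]
  rfl

/-- upcrossings of edge `(x,x+1)` in steps `< t` -/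
def up (t : ℕ) (x : ℤ) : ℕ :=
  ((Finset.range t).filter (fun s => walk a s = x ∧ a x (vis a s x) = true)).card

/-- downcrossings of edge `(x-1,x)` in steps `< t` -/
def dn (t : ℕ) (x : ℤ) : ℕ :=
  ((Finset.range t).filter (fun s => walk a s = x ∧ a x (vis a s x) = false)).card

lemma up_succ (t : ℕ) (x : ℤ) :
    up a (t+1) x = up a t x
      + (if walk a t = x ∧ a x (vis a t x) = true then 1 else 0) := fcard_succ _ t

lemma dn_succ (t : ℕ) (x : ℤ) :
    dn a (t+1) x = dn a t x
      + (if walk a t = x ∧ a x (vis a t x) = false then 1 else 0) := fcard_succ _ t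

lemma up_mono {t t' : ℕ} (h : t ≤ t') (x : ℤ) : up a t x ≤ up a t' x := fcard_mono _ h

lemma up_zero (x : ℤ) : up a 0 x = 0 := by simp [up]

lemma dn_zero (x : ℤ) : dn a 0 x = 0 := by simp [dn]

/-- step dichotomy -/
lemma walk_step (t : ℕ) :
    (walk a (t+1) = walk a t + 1 ∧ a (walk a t) (vis a t (walk a t)) = true) ∨
    (walk a (t+1) = walk a t - 1 ∧ a (walk a t) (vis a t (walk a t)) = false) := by
  rcases Bool.eq_false_or_eq_true (a (walk a t) (vis a t (walk a t))) with h | h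
  · left; rw [walk_succ, h]; simp
  · right; rw [walk_succ, h]; constructor; · simp; ring
    · rfl

lemma up_col (t : ℕ) (x : ℤ) : up a t x = cntT (a x) (vis a t x) := by
  induction t with
  | zero => simp [up_zero, vis, cntT]
  | succ t ih =>
    rw [up_succ, vis_succ, ih]
    by_cases h : walk a t = x
    · rw [if_pos h, cntT_succ]
      by_cases h2 : a x (vis a t x) = true <;> simp [h, h2]
    · simp [h]

lemma dn_col (t : ℕ) (x : ℤ) : dn a t x = cntF (a x) (vis a t x) := by
  induction t with
  | zero => simp [dn_zero, vis, cntF]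
  | succ t ih =>
    rw [dn_succ, vis_succ, ih]
    by_cases h : walk a t = x
    · rw [if_pos h, cntF_succ]
      by_cases h2 : a x (vis a t x) = false <;> simp [h, h2]
    · simp [h]

/-- crossing–position balance for the edge `(x-1,x)` -/
lemma flow (t : ℕ) (x : ℤ) :
    (up a t (x-1) : ℤ) - (dn a t x : ℤ)
      = (if x ≤ walk a t then 1 else 0) - (if x ≤ 0 then 1 else 0) := by
  induction t with
  | zero => rw [up_zero, dn_zero, walk_zero]; simp
  | succ t ih =>
    rw [up_succ, dn_succ]
    rcases walk_step a t with ⟨hw, ha⟩ | ⟨hw, ha⟩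
    · -- step up
      have hdn : ¬ (walk a t = x ∧ a x (vis a t x) = false) := by
        rintro ⟨h1, h2⟩; rw [h1] at ha; rw [ha] at h2; exact absurd h2 (by simp)
      rw [if_neg hdn]
      by_cases hx : walk a t = x - 1
      · rw [if_pos ⟨hx, by rw [← hx]; exact ha⟩]
        rw [hw]
        push_cast
        split_ifs with h1 h2 h2 <;> omega
      · rw [if_neg (by rintro ⟨h1, _⟩; exact hx h1)]
        rw [hw]
        push_cast
        split_ifs with h1 h2 h2 <;> omega
    · -- step down
      have hup : ¬ (walk a t = x - 1 ∧ a (x-1) (vis a t (x-1)) = true) := by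
        rintro ⟨h1, h2⟩; rw [h1] at ha; rw [ha] at h2; exact absurd h2 (by simp)
      rw [if_neg hup]
      by_cases hx : walk a t = x
      · rw [if_pos ⟨hx, by rw [← hx]; exact ha⟩]
        rw [hw]
        push_cast
        split_ifs with h1 h2 h2 <;> omega
      · rw [if_neg (by rintro ⟨h1, _⟩; exact hx h1)]
        rw [hw]
        push_cast
        split_ifs with h1 h2 h2 <;> omega

lemma walk_nonneg {t : ℕ} (h : ∀ s ≤ t, walk a s ≠ -1) : 0 ≤ walk a t := by
  induction t with
  | zero => rw [walk_zero]
  | succ t ih =>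
    have h0 : 0 ≤ walk a t := ih (fun s hs => h s (by omega))
    rcases walk_step a t with ⟨hw, _⟩ | ⟨hw, _⟩
    · omega
    · have := h (t+1) le_rfl; omega

/-- discrete intermediate value, upward -/
lemma ivt_up (v : ℤ) : ∀ t2 t1 : ℕ, t1 ≤ t2 → walk a t1 ≤ v → v ≤ walk a t2 →
    ∃ r, t1 ≤ r ∧ r ≤ t2 ∧ walk a r = v := by
  intro t2
  induction t2 with
  | zero =>
    intro t1 h1 h2 h3
    have : t1 = 0 := by omega
    subst this
    exact ⟨0, le_rfl, le_rfl, le_antisymm h2 h3⟩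
  | succ t2 ih =>
    intro t1 h1 h2 h3
    by_cases he : v ≤ walk a t2
    · rcases Nat.eq_or_lt_of_le h1 with heq | hlt
      · exact ⟨t1, le_rfl, le_of_eq heq, le_antisymm h2 (by rw [heq]; exact h3)⟩
      · obtain ⟨r, hr1, hr2, hr3⟩ := ih t1 (by omega) h2 he
        exact ⟨r, hr1, by omega, hr3⟩
    · push_neg at he
      rcases Nat.eq_or_lt_of_le h1 with heq | hlt
      · exact ⟨t1, le_rfl, le_of_eq heq, le_antisymm h2 (by rw [heq]; exact h3)⟩
      · have hw2 : walk a (t2+1) = v := by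
          rcases walk_step a t2 with ⟨hw, _⟩ | ⟨hw, _⟩ <;> omega
        exact ⟨t2+1, by omega, le_rfl, hw2⟩

/-- discrete intermediate value, downward -/
lemma ivt_down (v : ℤ) : ∀ t2 t1 : ℕ, t1 ≤ t2 → v ≤ walk a t1 → walk a t2 ≤ v →
    ∃ r, t1 ≤ r ∧ r ≤ t2 ∧ walk a r = v := by
  intro t2
  induction t2 with
  | zero =>
    intro t1 h1 h2 h3
    have : t1 = 0 := by omega
    subst this
    exact ⟨0, le_rfl, le_rfl, le_antisymm h3 h2⟩
  | succ t2 ih =>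
    intro t1 h1 h2 h3
    by_cases he : walk a t2 ≤ v
    · rcases Nat.eq_or_lt_of_le h1 with heq | hlt
      · exact ⟨t1, le_rfl, le_of_eq heq, le_antisymm (by rw [heq]; exact h3) h2⟩
      · obtain ⟨r, hr1, hr2, hr3⟩ := ih t1 (by omega) h2 he
        exact ⟨r, hr1, by omega, hr3⟩
    · push_neg at he
      rcases Nat.eq_or_lt_of_le h1 with heq | hlt
      · exact ⟨t1, le_rfl, le_of_eq heq, le_antisymm (by rw [heq]; exact h3) h2⟩
      · have hw2 : walk a (t2+1) = v := by
          rcases walk_step a t2 with ⟨hw, _⟩ | ⟨hw, _⟩ <;> omega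
        exact ⟨t2+1, by omega, le_rfl, hw2⟩

/-- no downcrossing from 0 before hitting -1 -/
lemma dn_zero_of_no_hit {t : ℕ} (h : ∀ s ≤ t, walk a s ≠ -1) : dn a t 0 = 0 := by
  rw [dn]
  rw [Finset.card_eq_zero, Finset.filter_eq_empty_iff]
  rintro s hs ⟨h1, h2⟩
  rw [Finset.mem_range] at hs
  have hstep := walk_step a s
  rcases hstep with ⟨hw, ha⟩ | ⟨hw, ha⟩
  · rw [h1] at ha; rw [ha] at h2; exact absurd h2 (by simp)
  · exact h (s+1) (by omega) (by omega)

/-- a visit to a positive site forces an earlier upcrossing into it -/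
lemma up_pos_of_vis {t : ℕ} {x : ℤ} (hx : 1 ≤ x) (hv : 1 ≤ vis a t x) :
    1 ≤ up a t (x-1) := by
  rw [vis] at hv
  obtain ⟨s, hs⟩ := Finset.card_pos.1 hv
  rw [Finset.mem_filter, Finset.mem_range] at hs
  have hf := flow a s x
  have h1 : x ≤ walk a s := le_of_eq hs.2.symm
  have h2 : ¬ (x ≤ 0) := by omega
  rw [if_pos h1, if_neg h2] at hf
  have : 1 ≤ up a s (x-1) := by omega
  exact le_trans this (up_mono a (le_of_lt hs.1) _)

/-- last visit spec -/
lemma last_visit {t : ℕ} {x : ℤ} (hv : 1 ≤ vis a t x) :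
    ∃ s, s < t ∧ walk a s = x ∧ vis a s x = vis a t x - 1 ∧
      (∀ r, r < t → walk a r = x → r ≤ s) := by
  classical
  set F := (Finset.range t).filter (fun s => walk a s = x) with hF
  have hne : F.Nonempty := Finset.card_pos.1 hv
  obtain ⟨s, hsmem, hsmax⟩ := F.exists_max_image id hne
  rw [hF, Finset.mem_filter, Finset.mem_range] at hsmem
  have hmax : ∀ r, r < t → walk a r = x → r ≤ s := by
    intro r hr1 hr2
    exact hsmax r (by rw [hF, Finset.mem_filter, Finset.mem_range]; exact ⟨hr1, hr2⟩)
  refine ⟨s, hsmem.1, hsmem.2, ?_, hmax⟩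
  -- vis a s x = vis a t x - 1
  have h1 : vis a (s+1) x = vis a s x + 1 := by
    rw [vis_succ, if_pos hsmem.2]
  have h2 : vis a (s+1) x = vis a t x := by
    apply le_antisymm (vis_mono a (by omega) x)
    rw [vis]
    apply Finset.card_le_card
    intro r hr
    rw [Finset.mem_filter, Finset.mem_range] at hr ⊢
    exact ⟨by have := hmax r hr.1 hr.2; omega, hr.2⟩
  omega

/-- if the walk is currently strictly below `x`, the upcrossings from `x` are
exactly `Uplus` of the downcrossings. -/
lemma up_eq_Uplus_dn {t : ℕ} {x : ℤ} (hlt : walk a t < x) :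
    up a t x = Uplus (a x) (dn a t x) := by
  rcases Nat.eq_zero_or_pos (vis a t x) with hv | hv
  · rw [up_col, dn_col, hv]
    simp [cntT, cntF, Uplus_zero]
  · obtain ⟨s, hst, hws, hvs, hmax⟩ := last_visit a hv
    -- the last arrow consumed at x is false
    have hlast : a x (vis a t x - 1) = false := by
      rcases Bool.eq_false_or_eq_true (a x (vis a t x - 1)) with h | h
      · exfalso
        have harrow : a x (vis a s x) = true := by rw [hvs]; exact h
        have hw1 : walk a (s+1) = x + 1 := by
          rcases walk_step a s with ⟨hw, _⟩ | ⟨hw, ha⟩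
          · omega
          · rw [hws] at ha; rw [ha] at harrow; exact absurd harrow (by simp)
        obtain ⟨r, hr1, hr2, hr3⟩ := ivt_down a x t (s+1) (by omega) (by omega) (by omega)
        have hrt : r < t := by
          rcases Nat.eq_or_lt_of_le hr2 with rfl | h'
          · omega
          · exact h'
        have := hmax r hrt hr3
        omega
      · exact h
    -- downcrossings at least 1
    have hdn : cntF (a x) (vis a t x) ≠ 0 := by
      intro h0
      have : a x (vis a t x - 1) = true := by
        by_contra hc
        have hf : a x (vis a t x - 1) = false := by
          rcases Bool.eq_false_or_eq_true (a x (vis a t x - 1)) with h | h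
          · exact absurd h hc
          · exact h
        have : vis a t x - 1 ∈ (Finset.range (vis a t x)).filter (fun i => a x i = false) := by
          rw [Finset.mem_filter, Finset.mem_range]
          exact ⟨by omega, hf⟩
        rw [cntF] at h0
        rw [Finset.card_eq_zero] at h0
        rw [h0] at this
        exact absurd this (Finset.notMem_empty _)
      rw [hlast] at this; exact absurd this (by simp)
    rw [up_col, dn_col]
    exact U3 (a x) hdn rfl hlast

/-- downcrossings from `x` are visits to `x-1` -/
lemma dn_le_vis (t : ℕ) (x : ℤ) : dn a t x ≤ vis a (t+1) (x-1) := by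
  rw [dn, vis]
  apply Finset.card_le_card_of_injOn (fun s => s + 1)
  · intro s hs
    rw [Finset.mem_coe, Finset.mem_filter, Finset.mem_range] at hs ⊢
    beta_reduce
    obtain ⟨hs1, hs2, hs3⟩ := hs
    refine ⟨by omega, ?_⟩
    rcases walk_step a s with ⟨hw, ha⟩ | ⟨hw, ha⟩
    · rw [hs2] at ha; rw [ha] at hs3; exact absurd hs3 (by simp)
    · omega
  · intro s1 _ s2 _ h
    simpa using h

lemma Zplus_succ (n : ℕ) : Zplus a (n+1) 1 = Uplus (a (n:ℤ)) (Zplus a n 1) := rfl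

lemma Zplus_zero : Zplus a 0 1 = 1 := rfl

/-- Part 1: invariant before hitting `-1`. -/
lemma inv (hnd : NonDegEnv a) {t : ℕ} (h : ∀ s ≤ t, walk a s ≠ -1) :
    ∀ n : ℕ, up a t (n : ℤ) ≤ Zplus a (n+1) 1 := by
  intro n
  induction n with
  | zero =>
    have hdn : dn a t 0 = 0 := dn_zero_of_no_hit a h
    have hF : cntF (a 0) (vis a t 0) = 0 := by rw [← dn_col]; exact hdn
    rw [Nat.cast_zero, up_col, Zplus_succ, Nat.cast_zero, Zplus_zero]
    exact U2 (a 0) (cntF_exists _ (hnd 0).1 _) (by rw [hF]; norm_num)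
  | succ n ih =>
    set x : ℤ := (n:ℤ) + 1 with hxdef
    have hx1 : ((n+1 : ℕ) : ℤ) = x := by push_cast; ring
    have hxm1 : x - 1 = (n : ℤ) := by omega
    have hf := flow a t x
    rw [if_neg (show ¬ x ≤ 0 by omega), hxm1] at hf
    have hZ2 : Zplus a (n+2) 1 = Uplus (a x) (Zplus a (n+1) 1) := by
      rw [Zplus_succ, hx1]
    rw [hx1, hZ2]
    by_cases hw : x ≤ walk a t
    · rw [if_pos hw] at hf
      have hcF : cntF (a x) (vis a t x) < Zplus a (n+1) 1 := by
        rw [← dn_col]; omega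
      rw [up_col]
      exact U2 (a x) (cntF_exists _ (hnd x).1 _) hcF
    · push_neg at hw
      rw [if_neg (by omega)] at hf
      have heq := up_eq_Uplus_dn a hw
      have hle : dn a t x ≤ Zplus a (n+1) 1 := by omega
      rcases lt_or_eq_of_le hle with hlt | hE
      · have hcF : cntF (a x) (vis a t x) < Zplus a (n+1) 1 := by rw [← dn_col]; omega
        rw [up_col]
        exact U2 (a x) (cntF_exists _ (hnd x).1 _) hcF
      · rw [heq, hE]

/-- Part 1 corollary: reaching `N` before `-1` forces `Z_N ≠ 0`. -/
lemma reach_imp (hnd : NonDegEnv a) {t : ℕ} {N : ℕ} (h : ∀ s ≤ t, walk a s ≠ -1)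
    (hw : walk a t = (N : ℤ)) : Zplus a N 1 ≠ 0 := by
  cases N with
  | zero => rw [Zplus_zero]; omega
  | succ n =>
    have hf := flow a t ((n:ℤ)+1)
    rw [if_pos (by rw [hw]; push_cast; omega), if_neg (by omega)] at hf
    have h1 : 1 ≤ up a t ((n:ℤ)+1-1) := by omega
    rw [show (n:ℤ)+1-1 = (n:ℤ) by ring] at h1
    have h2 := inv a hnd h n
    omega

/-- Part 2: exact identity at the hitting time of `-1`. -/
lemma hit_exact (hnd : NonDegEnv a) {T : ℕ} (hT : walk a T = -1)
    (hprev : ∀ s < T, walk a s ≠ -1) :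
    ∀ n : ℕ, up a T (n : ℤ) = Zplus a (n+1) 1 := by
  intro n
  induction n with
  | zero =>
    have hup : up a T (0-1 : ℤ) = 0 := by
      rw [up, Finset.card_eq_zero, Finset.filter_eq_empty_iff]
      rintro s hs ⟨h1, _⟩
      rw [Finset.mem_range] at hs
      exact hprev s hs (by omega)
    have hf := flow a T 0
    rw [hup, if_neg (by omega), if_pos le_rfl] at hf
    have hdn : dn a T 0 = 1 := by omega
    have heq := up_eq_Uplus_dn a (show walk a T < 0 by omega)
    rw [Nat.cast_zero, heq, hdn, Zplus_succ, Nat.cast_zero, Zplus_zero]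
  | succ n ih =>
    set x : ℤ := (n:ℤ) + 1 with hxdef
    have hx1 : ((n+1 : ℕ) : ℤ) = x := by push_cast; ring
    have hxm1 : x - 1 = (n : ℤ) := by omega
    have hf := flow a T x
    rw [if_neg (by omega), if_neg (by omega), hxm1] at hf
    have hdn : dn a T x = Zplus a (n+1) 1 := by omega
    have heq := up_eq_Uplus_dn a (show walk a T < x by omega)
    rw [hx1, heq, hdn, Zplus_succ a (n+1), hx1]

/-- Part 3: if the walk never hits `-1` it reaches every level. -/
lemma escape (hnd : NonDegEnv a) (h : ∀ s, walk a s ≠ -1) (N : ℕ) :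
    ∃ t, walk a t = (N : ℤ) := by
  by_contra hc
  push_neg at hc
  have hnn : ∀ t, 0 ≤ walk a t := fun t => walk_nonneg a (fun s _ => h s)
  have hbd : ∀ t, walk a t < (N : ℤ) := by
    intro t
    by_contra hb
    push_neg at hb
    obtain ⟨r, _, _, hr⟩ := ivt_up a (N:ℤ) t 0 (Nat.zero_le t)
      (by rw [walk_zero]; positivity) hb
    exact hc r hr
  have hN1 : 1 ≤ N := by
    have := hbd 0; rw [walk_zero] at this; exact_mod_cast this
  -- total visit count
  have key : ∀ t, (∑ x ∈ Finset.range N, vis a t (x:ℤ)) = t := by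
    intro t
    induction t with
    | zero => simp [vis]
    | succ t ih =>
      have hsum : (∑ x ∈ Finset.range N, vis a (t+1) (x:ℤ))
          = (∑ x ∈ Finset.range N, vis a t (x:ℤ))
            + ∑ x ∈ Finset.range N, (if walk a t = (x:ℤ) then 1 else 0) := by
        rw [← Finset.sum_add_distrib]
        exact Finset.sum_congr rfl (fun x _ => vis_succ a t (x:ℤ))
      have hone : (∑ x ∈ Finset.range N, (if walk a t = (x:ℤ) then 1 else 0)) = 1 := by
        have h1 : ∀ x ∈ Finset.range N,
            (if walk a t = (x:ℤ) then 1 else 0) = (if x = (walk a t).toNat then 1 else 0) := by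
          intro x _
          congr 1
          have h2 := hnn t
          simp only [eq_iff_iff]
          omega
        rw [Finset.sum_congr rfl h1, Finset.sum_ite_eq' (Finset.range N) ((walk a t).toNat)]
        rw [if_pos]
        rw [Finset.mem_range]
        have := hbd t; have := hnn t
        omega
      rw [hsum, hone, ih]
  -- some site is visited unboundedly often
  set S : Set ℕ := {x : ℕ | ∀ k, ∃ t, k ≤ vis a t (x:ℤ)} with hS
  have hSne : S.Nonempty := by
    by_contra hSe
    have hall : ∀ x : ℕ, ∃ k, ∀ t, vis a t (x:ℤ) < k := by
      intro x
      have : x ∉ S := fun hx => hSe ⟨x, hx⟩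
      rw [hS, Set.mem_setOf_eq] at this
      push_neg at this
      obtain ⟨k, hk⟩ := this
      exact ⟨k + 1, fun t => by have := hk t; omega⟩
    choose K hK using hall
    set B := ∑ x ∈ Finset.range N, K x with hB
    have h1 : (∑ x ∈ Finset.range N, vis a B (x:ℤ)) < ∑ x ∈ Finset.range N, K x :=
      Finset.sum_lt_sum_of_nonempty ⟨0, Finset.mem_range.2 (by omega)⟩
        (fun x _ => hK x B)
    rw [key B] at h1
    omega
  set x0 := sInf S with hx0def
  have hx0 : x0 ∈ S := Nat.sInf_mem hSne
  have hdnu : ∀ k, ∃ t, k ≤ dn a t (x0:ℤ) := by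
    intro k
    obtain ⟨j, hj⟩ := cntF_exists (a (x0:ℤ)) (hnd (x0:ℤ)).1 k
    obtain ⟨t, ht⟩ := hx0 j
    refine ⟨t, ?_⟩
    rw [dn_col]
    calc k = cntF (a (x0:ℤ)) j := hj.symm
      _ ≤ cntF (a (x0:ℤ)) (vis a t (x0:ℤ)) := cntF_mono _ ht
  rcases Nat.eq_zero_or_pos x0 with h0 | hpos
  · obtain ⟨t, ht⟩ := hdnu 1
    rw [h0] at ht
    push_cast at ht
    have := dn_zero_of_no_hit a (t := t) (fun s _ => h s)
    omega
  · have hy : x0 - 1 ∈ S := by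
      rw [hS, Set.mem_setOf_eq]
      intro k
      obtain ⟨t, ht⟩ := hdnu k
      refine ⟨t + 1, ?_⟩
      have := dn_le_vis a t (x0:ℤ)
      rw [show ((x0:ℤ) - 1) = ((x0 - 1 : ℕ) : ℤ) by omega] at this
      omega
    have := Nat.sInf_le hy
    omega

/-- The master equivalence. -/
lemma master (hnd : NonDegEnv a) (N : ℕ) :
    (∃ t, (∀ s ≤ t, walk a s ≠ -1) ∧ walk a t = (N : ℤ)) ↔ Zplus a N 1 ≠ 0 := by
  constructor
  · rintro ⟨t, h1, h2⟩
    exact reach_imp a hnd h1 h2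
  · intro hZ
    by_cases hhit : ∀ s, walk a s ≠ -1
    · obtain ⟨t, ht⟩ := escape a hnd hhit N
      exact ⟨t, fun s _ => hhit s, ht⟩
    · push_neg at hhit
      have hex : ∃ s, walk a s = -1 := hhit
      classical
      set T := Nat.find hex with hTdef
      have hT : walk a T = -1 := Nat.find_spec hex
      have hprev : ∀ s < T, walk a s ≠ -1 := fun s hs => Nat.find_min hex hs
      cases N with
      | zero =>
        refine ⟨0, ?_, by rw [walk_zero]; rfl⟩
        intro s hs
        rw [Nat.le_zero] at hs
        subst hs
        rw [walk_zero]; omega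
      | succ n =>
        have hup := hit_exact a hnd hT hprev n
        have hpos : 1 ≤ up a T (n:ℤ) := by
          rw [hup]; omega
        rw [up] at hpos
        obtain ⟨s, hs⟩ := Finset.card_pos.1 hpos
        rw [Finset.mem_filter, Finset.mem_range] at hs
        obtain ⟨hst, hws, har⟩ := hs
        have hw1 : walk a (s+1) = (n:ℤ) + 1 := by
          rcases walk_step a s with ⟨hw, _⟩ | ⟨hw, ha⟩
          · omega
          · rw [hws] at ha; rw [ha] at har; exact absurd har (by simp)
        refine ⟨s+1, ?_, by rw [hw1]; push_cast; ring⟩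
        intro r hr
        apply hprev
        have hne : s + 1 ≠ T := by
          intro he
          rw [he, hT] at hw1
          omega
        omega

end Stmt7

/-- the extinction time `τ` of `Z⁺` equals `M + 1`, where `M` is the
maximal position of the walk before hitting `-1` (values in `ℕ∞`, with `∞ = ∞ + 1`). -/
theorem stmt_7 (a : ℤ → ℕ → Bool) (hnd : NonDegEnv a) :
    (⨅ n ∈ {n : ℕ | Zplus a n 1 = 0}, (n : ℕ∞)) =
      (⨆ t ∈ {t : ℕ | ∀ s ≤ t, walk a s ≠ -1}, ((walk a t).toNat : ℕ∞)) + 1 := by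
  classical
  open Stmt7 in
  by_cases hA : ∃ n, Zplus a n 1 = 0
  · set n0 := Nat.find hA with hn0def
    have hn0 : Zplus a n0 1 = 0 := Nat.find_spec hA
    have hmin : ∀ m, m < n0 → Zplus a m 1 ≠ 0 := fun m hm => Nat.find_min hA hm
    have hn0pos : 1 ≤ n0 := by
      rcases Nat.eq_zero_or_pos n0 with h | h
      · rw [h, Stmt7.Zplus_zero] at hn0; omega
      · exact h
    set M := n0 - 1 with hMdef
    have hL : (⨅ n ∈ {n : ℕ | Zplus a n 1 = 0}, (n : ℕ∞)) = (n0 : ℕ∞) := by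
      apply le_antisymm
      · exact iInf_le_of_le n0 (iInf_le_of_le hn0 le_rfl)
      · apply le_iInf₂
        intro n hn
        exact_mod_cast Nat.find_le hn
    have hR : (⨆ t ∈ {t : ℕ | ∀ s ≤ t, walk a s ≠ -1}, ((walk a t).toNat : ℕ∞))
        = (M : ℕ∞) := by
      apply le_antisymm
      · apply iSup₂_le
        intro t ht
        have htt : ∀ s ≤ t, walk a s ≠ -1 := ht
        rw [Nat.cast_le]
        by_contra hb
        push_neg at hb
        have hw : (n0 : ℤ) ≤ walk a t := by
          have := Stmt7.walk_nonneg a htt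
          omega
        obtain ⟨r, _, hr2, hr3⟩ := Stmt7.ivt_up a (n0:ℤ) t 0 (Nat.zero_le t)
          (by rw [Stmt7.walk_zero]; positivity) hw
        have := (Stmt7.master a hnd n0).1 ⟨r, fun s hs => htt s (le_trans hs hr2), hr3⟩
        exact this hn0
      · obtain ⟨t, h1, h2⟩ := (Stmt7.master a hnd M).2 (hmin M (by omega))
        have h3 : ((walk a t).toNat : ℕ∞) = (M : ℕ∞) := by
          rw [h2]; simp
        calc (M : ℕ∞) = ((walk a t).toNat : ℕ∞) := h3.symm
          _ ≤ _ := le_iSup₂ (f := fun t (_ : t ∈ {t : ℕ | ∀ s ≤ t, walk a s ≠ -1}) =>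
              ((walk a t).toNat : ℕ∞)) t h1
    rw [hL, hR]
    have hM1 : M + 1 = n0 := by omega
    rw [show ((M : ℕ∞) + 1) = ((M + 1 : ℕ) : ℕ∞) by push_cast; rfl, hM1]
  · push_neg at hA
    have hLe : {n : ℕ | Zplus a n 1 = 0} = ∅ := by
      ext n; simp [hA n]
    rw [hLe]
    simp only [Set.mem_empty_iff_false, iInf_false, iInf_top]
    have hR : (⨆ t ∈ {t : ℕ | ∀ s ≤ t, walk a s ≠ -1}, ((walk a t).toNat : ℕ∞)) = ⊤ := by
      set X := (⨆ t ∈ {t : ℕ | ∀ s ≤ t, walk a s ≠ -1}, ((walk a t).toNat : ℕ∞)) with hX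
      have hub : ∀ m : ℕ, (m : ℕ∞) ≤ X := by
        intro m
        obtain ⟨t, h1, h2⟩ := (Stmt7.master a hnd m).2 (hA m)
        have h3 : ((walk a t).toNat : ℕ∞) = (m : ℕ∞) := by rw [h2]; simp
        rw [← h3, hX]
        exact le_iSup₂ (f := fun t (_ : t ∈ {t : ℕ | ∀ s ≤ t, walk a s ≠ -1}) =>
            ((walk a t).toNat : ℕ∞)) t h1
      rcases eq_top_or_lt_top X with h | h
      · exact h
      · exfalso
        lift X to ℕ using h.ne with m
        have := hub (m + 1)
        rw [Nat.cast_le] at this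
        omega
    rw [hR]
    rfl
end
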